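/- Let G be a finite group and N a normal subgroup with G/N isomorphic to (ℤ/2ℤ) × (ℤ/2ℤ). Let ω₁ and ω₂ be two distinct nontrivial homomorphisms G → ℂˣ trivial on N, and let π be an irreducible finite-dimensional complex representation of G with π ≅ π ⊗ ω₁ and π ≅ π ⊗ ω₂. Then exactly one of the following holds: Res_N π is a direct sum of four pairwise non-isomorphic irreducible representations of N, or Res_N π ≅ ρ ⊕ ρ for a single irreducible representation ρ of N. -/

import Mathlib

noncomputable section

namespace RestrictionMult

variable {G : Type*} [Group G]

/-- The submodule of equivariant linear maps between two representations. -/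
def equivariantHoms {V W : Type*} [AddCommGroup V] [Module ℂ V]
    [AddCommGroup W] [Module ℂ W]
    (π : Representation ℂ G V) (σ : Representation ℂ G W) :
    Submodule ℂ (V →ₗ[ℂ] W) where
  carrier := {f | ∀ g v, f (π g v) = σ g (f v)}
  add_mem' := by intro f₁ f₂ h₁ h₂ g v; simp [h₁ g v, h₂ g v]
  zero_mem' := by intro g v; simp
  smul_mem' := by intro c f hf g v; simp [hf g v]

/-- Two representations are equivalent (isomorphic). -/
def IsRepEquiv {V W : Type*} [AddCommGroup V] [Module ℂ V]
    [AddCommGroup W] [Module ℂ W]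
    (π : Representation ℂ G V) (σ : Representation ℂ G W) : Prop :=
  ∃ e : V ≃ₗ[ℂ] W, ∀ g v, e (π g v) = σ g (e v)

/-- A representation is irreducible if the space is nonzero and the only invariant
submodules are `⊥` and `⊤`. -/
def IsIrreducibleRep {V : Type*} [AddCommGroup V] [Module ℂ V]
    (π : Representation ℂ G V) : Prop :=
  (∃ v : V, v ≠ 0) ∧
    ∀ U : Submodule ℂ V, (∀ g, ∀ v ∈ U, π g v ∈ U) → U = ⊥ ∨ U = ⊤

/-- The twist of a representation by a character `χ : G →* ℂˣ`. -/
def twist {V : Type*} [AddCommGroup V] [Module ℂ V]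
    (π : Representation ℂ G V) (χ : G →* ℂˣ) : Representation ℂ G V where
  toFun g := (χ g : ℂ) • π g
  map_one' := by simp
  map_mul' g h := by
    ext v
    simp only [Module.End.mul_apply, LinearMap.smul_apply, map_smul, map_mul, Units.val_mul,
      mul_smul]
    rw [smul_comm]

/-- The direct sum of two representations. -/
def dsum {V W : Type*} [AddCommGroup V] [Module ℂ V]
    [AddCommGroup W] [Module ℂ W]
    (π : Representation ℂ G V) (σ : Representation ℂ G W) :
    Representation ℂ G (V × W) where
  toFun g := (π g).prodMap (σ g)
  map_one' := by ext v <;> simp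
  map_mul' g h := by ext v <;> simp [Module.End.mul_apply]

/-- The subrepresentation on an invariant submodule. -/
def resSub {V : Type*} [AddCommGroup V] [Module ℂ V]
    (π : Representation ℂ G V) (U : Submodule ℂ V)
    (hU : ∀ g, ∀ v ∈ U, π g v ∈ U) : Representation ℂ G U where
  toFun g := (π g).restrict (fun v hv => hU g v hv)
  map_one' := by ext v; simp [LinearMap.restrict_apply]
  map_mul' g h := by ext v; simp [LinearMap.restrict_apply, Module.End.mul_apply]

/-- The conjugate `π^g` of a representation of a normal subgroup `N`,
given by `x ↦ π (g⁻¹ x g)`. -/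
def conjRep {N : Subgroup G} [N.Normal] {V : Type*} [AddCommGroup V] [Module ℂ V]
    (π : Representation ℂ N V) (g : G) : Representation ℂ N V :=
  π.comp (MulAut.conjNormal g⁻¹ : N ≃* N).toMonoidHom

/-- The space of the representation of `G` induced from a representation of a
subgroup `N`: functions `f : G → V` with `f (n * x) = π n (f x)`. -/
def indSubmodule (N : Subgroup G) {V : Type*} [AddCommGroup V] [Module ℂ V]
    (π : Representation ℂ N V) : Submodule ℂ (G → V) where
  carrier := {f | ∀ (n : N) (x : G), f (n * x) = π n (f x)}
  add_mem' := by intro f₁ f₂ h₁ h₂ n x; simp [h₁ n x, h₂ n x]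
  zero_mem' := by intro n x; simp
  smul_mem' := by intro c f hf n x; simp [hf n x]

/-- The representation of `G` induced from a representation `π` of a subgroup `N`,
acting by right translation on `indSubmodule N π`. -/
def ind (N : Subgroup G) {V : Type*} [AddCommGroup V] [Module ℂ V]
    (π : Representation ℂ N V) : Representation ℂ G (indSubmodule N π) where
  toFun g :=
    { toFun := fun f => ⟨fun x => (f : G → V) (x * g),
        fun n x => by simpa [mul_assoc] using f.2 n (x * g)⟩
      map_add' := fun f₁ f₂ => by ext x; rfl
      map_smul' := fun c f => by ext x; rfl }
  map_one' := by ext f x; simp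
  map_mul' g h := by ext f x; simp [Module.End.mul_apply, mul_assoc]


/-- `π` decomposes as a direct sum of four pairwise non-isomorphic irreducible
subrepresentations. -/
def DecomposesAsFourDistinctIrreds {H : Type*} [Group H] {V : Type*}
    [AddCommGroup V] [Module ℂ V] (π : Representation ℂ H V) : Prop :=
  ∃ (U : Fin 4 → Submodule ℂ V) (hU : ∀ i g, ∀ v ∈ U i, π g v ∈ U i),
    iSupIndep U ∧ (⨆ i, U i) = ⊤ ∧
      (∀ i, IsIrreducibleRep (resSub π (U i) (hU i))) ∧
      ∀ i j, i ≠ j → ¬ IsRepEquiv (resSub π (U i) (hU i)) (resSub π (U j) (hU j))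

/-- `π` decomposes as a direct sum `ρ ⊕ ρ` of two isomorphic irreducible
subrepresentations. -/
def DecomposesAsTwiceIrred {H : Type*} [Group H] {V : Type*}
    [AddCommGroup V] [Module ℂ V] (π : Representation ℂ H V) : Prop :=
  ∃ (U₁ U₂ : Submodule ℂ V) (h₁ : ∀ g, ∀ v ∈ U₁, π g v ∈ U₁)
    (h₂ : ∀ g, ∀ v ∈ U₂, π g v ∈ U₂),
    U₁ ⊓ U₂ = ⊥ ∧ U₁ ⊔ U₂ = ⊤ ∧
      IsIrreducibleRep (resSub π U₁ h₁) ∧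
      IsRepEquiv (resSub π U₁ h₁) (resSub π U₂ h₂)

section Helpers

variable {H : Type*} [Group H] {V W X : Type*}
  [AddCommGroup V] [Module ℂ V] [AddCommGroup W] [Module ℂ W]
  [AddCommGroup X] [Module ℂ X]

lemma mem_equivariantHoms {π : Representation ℂ H V} {σ : Representation ℂ H W}
    {f : V →ₗ[ℂ] W} :
    f ∈ equivariantHoms π σ ↔ ∀ g v, f (π g v) = σ g (f v) := Iff.rfl

@[simp] lemma resSub_apply {π : Representation ℂ H V} {U : Submodule ℂ V}
    {hU : ∀ g, ∀ v ∈ U, π g v ∈ U} (g : H) (x : U) :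
    (resSub π U hU g x : V) = π g (x : V) := rfl

@[simp] lemma twist_apply {π : Representation ℂ H V} {χ : H →* ℂˣ} (g : H) (v : V) :
    twist π χ g v = (χ g : ℂ) • π g v := rfl

lemma IsRepEquiv.refl (π : Representation ℂ H V) : IsRepEquiv π π :=
  ⟨LinearEquiv.refl ℂ V, fun _ _ => rfl⟩

lemma IsRepEquiv.symm {π : Representation ℂ H V} {σ : Representation ℂ H W}
    (h : IsRepEquiv π σ) : IsRepEquiv σ π := by
  obtain ⟨e, he⟩ := h
  refine ⟨e.symm, fun g w => e.injective ?_⟩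
  rw [he, e.apply_symm_apply, e.apply_symm_apply]

lemma IsRepEquiv.trans {π : Representation ℂ H V} {σ : Representation ℂ H W}
    {τ : Representation ℂ H X} (h₁ : IsRepEquiv π σ) (h₂ : IsRepEquiv σ τ) :
    IsRepEquiv π τ := by
  obtain ⟨e₁, he₁⟩ := h₁
  obtain ⟨e₂, he₂⟩ := h₂
  exact ⟨e₁.trans e₂, fun g v => by simp [he₁, he₂]⟩

lemma nontrivial_of_irred {π : Representation ℂ H V} (h : IsIrreducibleRep π) :
    Nontrivial V := by
  obtain ⟨v, hv⟩ := h.1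
  exact ⟨v, 0, hv⟩

lemma isIrred_of_equiv {π : Representation ℂ H V} {σ : Representation ℂ H W}
    (he : IsRepEquiv π σ) (h : IsIrreducibleRep π) : IsIrreducibleRep σ := by
  obtain ⟨e, hev⟩ := he
  constructor
  · obtain ⟨v, hv⟩ := h.1
    exact ⟨e v, fun h0 => hv (by simpa using e.injective (by simpa using h0))⟩
  · intro U hU
    have hinv : ∀ g, ∀ v ∈ U.comap (e : V →ₗ[ℂ] W), π g v ∈ U.comap (e : V →ₗ[ℂ] W) := by
      intro g v hv
      simp only [Submodule.mem_comap, LinearEquiv.coe_coe] at hv ⊢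
      rw [hev]
      exact hU g _ hv
    rcases h.2 _ hinv with h0 | h0
    · left
      rw [eq_bot_iff]
      intro w hw
      have : e.symm w ∈ U.comap (e : V →ₗ[ℂ] W) := by
        simp [Submodule.mem_comap, hw]
      rw [h0] at this
      simpa using congrArg e this
    · right
      rw [eq_top_iff]
      intro w _
      have : e.symm w ∈ (⊤ : Submodule ℂ V) := trivial
      rw [← h0] at this
      simpa using this

/-- Schur: an equivariant map between irreducible representations is zero or bijective. -/
lemma schur_bij {π : Representation ℂ H V} {σ : Representation ℂ H W}
    (hπ : IsIrreducibleRep π) (hσ : IsIrreducibleRep σ) {f : V →ₗ[ℂ] W}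
    (hf : f ∈ equivariantHoms π σ) : f = 0 ∨ Function.Bijective f := by
  have hker : ∀ g, ∀ v ∈ LinearMap.ker f, π g v ∈ LinearMap.ker f := by
    intro g v hv
    rw [LinearMap.mem_ker] at hv ⊢
    rw [hf, hv, map_zero]
  have hrange : ∀ g, ∀ w ∈ LinearMap.range f, σ g w ∈ LinearMap.range f := by
    rintro g w ⟨v, rfl⟩
    exact ⟨π g v, hf g v⟩
  rcases hπ.2 _ hker with h0 | h0
  · rcases hσ.2 _ hrange with h1 | h1
    · left
      ext v
      have : f v ∈ LinearMap.range f := ⟨v, rfl⟩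
      rw [h1] at this
      simpa using this
    · right
      exact ⟨LinearMap.ker_eq_bot.1 h0, LinearMap.range_eq_top.1 h1⟩
  · left
    ext v
    have : v ∈ LinearMap.ker f := h0 ▸ trivial
    simpa using this

lemma isRepEquiv_of_equivariant_ne_zero {π : Representation ℂ H V} {σ : Representation ℂ H W}
    (hπ : IsIrreducibleRep π) (hσ : IsIrreducibleRep σ) {f : V →ₗ[ℂ] W}
    (hf : f ∈ equivariantHoms π σ) (hne : f ≠ 0) : IsRepEquiv π σ := by
  rcases schur_bij hπ hσ hf with h | h
  · exact absurd h hne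
  · exact ⟨LinearEquiv.ofBijective f h, fun g v => hf g v⟩

/-- Schur: an equivariant endomorphism of an irreducible representation is scalar. -/
lemma end_scalar [FiniteDimensional ℂ V] {π : Representation ℂ H V}
    (hπ : IsIrreducibleRep π) {f : V →ₗ[ℂ] V}
    (hf : f ∈ equivariantHoms π π) : ∃ c : ℂ, f = c • LinearMap.id := by
  have : Nontrivial V := nontrivial_of_irred hπ
  obtain ⟨c, hc⟩ := Module.End.exists_eigenvalue (f : Module.End ℂ V)
  obtain ⟨v, hv⟩ := hc.exists_hasEigenvector
  refine ⟨c, ?_⟩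
  set F : V →ₗ[ℂ] V := f - c • LinearMap.id with hF
  have hmem : F ∈ equivariantHoms π π := by
    refine Submodule.sub_mem _ hf (Submodule.smul_mem _ _ ?_)
    intro g v; rfl
  have hmem' : ∀ g w, F (π g w) = π g (F w) := hmem
  have hker : ∀ g, ∀ w ∈ LinearMap.ker F, π g w ∈ LinearMap.ker F := by
    intro g w hw
    rw [LinearMap.mem_ker] at hw ⊢
    rw [hmem', hw, map_zero]
  rcases hπ.2 _ hker with h0 | h0
  · exfalso
    apply hv.2
    have : v ∈ LinearMap.ker F := by
      rw [LinearMap.mem_ker, hF]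
      simp only [LinearMap.sub_apply, LinearMap.smul_apply, LinearMap.id_apply]
      rw [hv.apply_eq_smul, sub_self]
    rw [h0] at this
    simpa using this
  · ext w
    have : w ∈ LinearMap.ker F := h0 ▸ trivial
    rw [LinearMap.mem_ker, hF] at this
    simp only [LinearMap.sub_apply, LinearMap.smul_apply, LinearMap.id_apply,
      sub_eq_zero] at this
    simpa using this

lemma finrank_equivariantHoms_eq_one [FiniteDimensional ℂ V] [FiniteDimensional ℂ W]
    {π : Representation ℂ H V} {σ : Representation ℂ H W}
    (hπ : IsIrreducibleRep π) (he : IsRepEquiv π σ) :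
    Module.finrank ℂ (equivariantHoms π σ) = 1 := by
  obtain ⟨e, hev⟩ := he
  have hspan : equivariantHoms π σ = Submodule.span ℂ {(e : V →ₗ[ℂ] W)} := by
    apply le_antisymm
    · intro f hf
      have hcomp : (e.symm : W →ₗ[ℂ] V) ∘ₗ f ∈ equivariantHoms π π := by
        intro g v
        simp only [LinearMap.comp_apply, LinearEquiv.coe_coe]
        rw [hf]
        apply e.injective
        rw [hev, e.apply_symm_apply, e.apply_symm_apply]
      obtain ⟨c, hc⟩ := end_scalar hπ hcomp
      have : f = c • (e : V →ₗ[ℂ] W) := by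
        ext v
        have := congrArg (fun (g : V →ₗ[ℂ] V) => e (g v)) hc
        simp only [LinearMap.comp_apply, LinearEquiv.coe_coe, LinearMap.smul_apply,
          LinearMap.id_apply, map_smul, e.apply_symm_apply] at this
        simpa using this
      rw [this]
      exact Submodule.smul_mem _ _ (Submodule.mem_span_singleton_self _)
    · rw [Submodule.span_singleton_le_iff_mem]
      intro g v
      exact hev g v
  rw [hspan]
  apply finrank_span_singleton
  intro h0
  obtain ⟨v, hv⟩ := hπ.1
  apply hv
  have hev0 : e v = 0 := by
    have := congrFun (congrArg (fun (f : V →ₗ[ℂ] W) => (f : V → W)) h0) v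
    simpa using this
  simpa using e.map_eq_zero_iff.mp hev0

lemma finrank_equivariantHoms_eq_zero
    {π : Representation ℂ H V} {σ : Representation ℂ H W}
    (hπ : IsIrreducibleRep π) (hσ : IsIrreducibleRep σ) (he : ¬ IsRepEquiv π σ) :
    Module.finrank ℂ (equivariantHoms π σ) = 0 := by
  have : equivariantHoms π σ = ⊥ := by
    rw [eq_bot_iff]
    intro f hf
    rcases schur_bij hπ hσ hf with h | h
    · simp [h, Submodule.mem_bot]
    · exact absurd ⟨LinearEquiv.ofBijective f h, fun g v => hf g v⟩ he
  rw [this]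
  simp

end Helpers

section Maschke

variable {H : Type*} [Group H] [Finite H] {V : Type*} [AddCommGroup V] [Module ℂ V]

lemma exists_invariant_projection (π : Representation ℂ H V) (U : Submodule ℂ V)
    (hU : ∀ g, ∀ v ∈ U, π g v ∈ U) :
    ∃ P : V →ₗ[ℂ] V, (∀ v, P v ∈ U) ∧ (∀ u ∈ U, P u = u) ∧
      (∀ g v, P (π g v) = π g (P v)) := by
  cases nonempty_fintype H
  obtain ⟨q, hq⟩ := U.exists_isCompl
  set p : V →ₗ[ℂ] V := U.subtype ∘ₗ U.linearProjOfIsCompl q hq with hp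
  have hpU : ∀ v, p v ∈ U := fun v => (U.linearProjOfIsCompl q hq v).2
  have hpid : ∀ u ∈ U, p u = u := by
    intro u hu
    simp [hp, Submodule.linearProjOfIsCompl_apply_left hq ⟨u, hu⟩]
    exact congrArg Subtype.val (Submodule.linearProjOfIsCompl_apply_left hq ⟨u, hu⟩)
  have hcard : (Fintype.card H : ℂ) ≠ 0 := by
    exact_mod_cast Fintype.card_ne_zero
  set P : V →ₗ[ℂ] V :=
    (Fintype.card H : ℂ)⁻¹ • ∑ h : H, (π h ∘ₗ p) ∘ₗ π h⁻¹ with hP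
  refine ⟨P, ?_, ?_, ?_⟩
  · intro v
    rw [hP]
    simp only [LinearMap.smul_apply, LinearMap.sum_apply, LinearMap.comp_apply]
    refine Submodule.smul_mem _ _ (Submodule.sum_mem _ fun h _ => ?_)
    exact hU h _ (hpU _)
  · intro u hu
    rw [hP]
    simp only [LinearMap.smul_apply, LinearMap.sum_apply, LinearMap.comp_apply]
    have : ∀ h : H, π h (p (π h⁻¹ u)) = u := by
      intro h
      rw [hpid _ (hU h⁻¹ u hu)]
      have := LinearMap.congr_fun (π.map_mul h h⁻¹) u
      simp only [Module.End.mul_apply] at this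
      rw [← this]
      simp
    simp only [this, Finset.sum_const, Finset.card_univ]
    rw [← Nat.cast_smul_eq_nsmul ℂ, smul_smul, inv_mul_cancel₀ hcard, one_smul]
  · intro g v
    rw [hP]
    simp only [LinearMap.smul_apply, LinearMap.sum_apply, LinearMap.comp_apply, map_smul]
    congr 1
    rw [map_sum]
    rw [← Equiv.sum_comp (Equiv.mulLeft g) (fun h => π h (p (π h⁻¹ (π g v))))]
    apply Finset.sum_congr rfl
    intro h _
    simp only [Equiv.coe_mulLeft]
    have e1 : π (g * h) = π g ∘ₗ π h := by
      rw [map_mul]; rfl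
    have e2 : π (g * h)⁻¹ (π g v) = π h⁻¹ v := by
      rw [mul_inv_rev]
      have : π (h⁻¹ * g⁻¹) = π h⁻¹ ∘ₗ π g⁻¹ := by rw [map_mul]; rfl
      rw [this]
      simp only [LinearMap.comp_apply]
      congr 1
      have := LinearMap.congr_fun (π.map_mul g⁻¹ g) v
      simp only [Module.End.mul_apply] at this
      rw [← this]
      simp
    rw [e1, e2]
    rfl

lemma exists_invariant_compl (π : Representation ℂ H V) (U : Submodule ℂ V)
    (hU : ∀ g, ∀ v ∈ U, π g v ∈ U) :
    ∃ U' : Submodule ℂ V, (∀ g, ∀ v ∈ U', π g v ∈ U') ∧ IsCompl U U' := by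
  obtain ⟨P, hPU, hPid, hPequiv⟩ := exists_invariant_projection π U hU
  refine ⟨LinearMap.ker P, ?_, ?_⟩
  · intro g v hv
    rw [LinearMap.mem_ker] at hv ⊢
    rw [hPequiv, hv, map_zero]
  · constructor
    · rw [disjoint_iff]
      rw [eq_bot_iff]
      intro v ⟨hv1, hv2⟩
      rw [SetLike.mem_coe, LinearMap.mem_ker] at hv2
      have := hPid v hv1
      rw [hv2] at this
      simpa using this.symm
    · rw [codisjoint_iff, eq_top_iff]
      intro v _
      have : v = P v + (v - P v) := by abel
      rw [this]
      refine Submodule.add_mem_sup (hPU v) ?_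
      rw [LinearMap.mem_ker, map_sub]
      have : P (P v) = P v := hPid _ (hPU v)
      rw [this, sub_self]

end Maschke

section Decomp

variable {H : Type*} [Group H] [Finite H] {V : Type*} [AddCommGroup V] [Module ℂ V]
  [FiniteDimensional ℂ V]

lemma exists_irred_decomp_aux (π : Representation ℂ H V) (n : ℕ) :
    ∀ (Wsub : Submodule ℂ V), Module.finrank ℂ Wsub = n →
      (∀ g, ∀ v ∈ Wsub, π g v ∈ Wsub) →
      ∃ (k : ℕ) (U : Fin k → Submodule ℂ V)
        (hU : ∀ i, ∀ g, ∀ v ∈ U i, π g v ∈ U i),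
        (∀ i, U i ≤ Wsub) ∧ iSupIndep U ∧ (⨆ i, U i) = Wsub ∧
          ∀ i, IsIrreducibleRep (resSub π (U i) (hU i)) := by
  induction n using Nat.strong_induction_on with
  | _ n IH =>
    intro Wsub hrank hWinv
    by_cases hbot : Wsub = ⊥
    · refine ⟨0, fun i => i.elim0, fun i => i.elim0, fun i => i.elim0, fun i => i.elim0, ?_,
        fun i => i.elim0⟩
      rw [hbot]
      exact iSup_of_empty _
    · have hex : ∃ m : ℕ, ∃ U : Submodule ℂ V, U ≤ Wsub ∧ (∀ g, ∀ v ∈ U, π g v ∈ U) ∧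
          U ≠ ⊥ ∧ Module.finrank ℂ U = m :=
        ⟨n, Wsub, le_rfl, hWinv, hbot, hrank⟩
      classical
      obtain ⟨U₀, hU₀le, hU₀inv, hU₀ne, hU₀rank⟩ := Nat.find_spec hex
      have hmin : ∀ T : Submodule ℂ V, T ≤ Wsub → (∀ g, ∀ v ∈ T, π g v ∈ T) → T ≠ ⊥ →
          Module.finrank ℂ U₀ ≤ Module.finrank ℂ T := by
        intro T h1 h2 h3
        rw [hU₀rank]
        exact Nat.find_min' hex ⟨T, h1, h2, h3, rfl⟩
      have hirr : IsIrreducibleRep (resSub π U₀ hU₀inv) := by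
        constructor
        · obtain ⟨x, hx, hxne⟩ := Submodule.exists_mem_ne_zero_of_ne_bot hU₀ne
          exact ⟨⟨x, hx⟩, fun h => hxne (by simpa using congrArg Subtype.val h)⟩
        · intro T hTinv
          set T' := T.map U₀.subtype with hT'
          have hT'le : T' ≤ U₀ := Submodule.map_subtype_le _ _
          have hT'inv : ∀ g, ∀ v ∈ T', π g v ∈ T' := by
            rintro g v ⟨t, ht, rfl⟩
            exact ⟨resSub π U₀ hU₀inv g t, hTinv g t ht, rfl⟩
          by_cases hT'bot : T' = ⊥
          · left
            rw [eq_bot_iff]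
            intro t ht
            have : (t : V) ∈ T' := ⟨t, ht, rfl⟩
            rw [hT'bot] at this
            simpa using Subtype.ext (by simpa using this : (t : V) = 0)
          · right
            have h1 : Module.finrank ℂ U₀ ≤ Module.finrank ℂ T' :=
              hmin T' (hT'le.trans hU₀le) hT'inv hT'bot
            have h2 : Module.finrank ℂ T' ≤ Module.finrank ℂ U₀ :=
              Submodule.finrank_mono hT'le
            have hEq : T' = U₀ := Submodule.eq_of_le_of_finrank_eq hT'le (le_antisymm h2 h1)
            rw [eq_top_iff]
            intro t _
            have : (t : V) ∈ T' := hEq.symm ▸ t.2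
            obtain ⟨t', ht', htt⟩ := this
            rwa [← Subtype.ext htt]
      obtain ⟨Q, hQinv, hQcompl⟩ := exists_invariant_compl π U₀ hU₀inv
      set T := Q ⊓ Wsub with hT
      have hTinv : ∀ g, ∀ v ∈ T, π g v ∈ T := fun g v hv => ⟨hQinv g v hv.1, hWinv g v hv.2⟩
      have hTle : T ≤ Wsub := inf_le_right
      have hU₀T : U₀ ⊓ T = ⊥ := by
        have h1 : U₀ ⊓ T ≤ U₀ ⊓ Q := inf_le_inf_left _ inf_le_left
        rw [disjoint_iff.mp hQcompl.disjoint] at h1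
        exact le_bot_iff.mp h1
      have hsupT : U₀ ⊔ T = Wsub := by
        have h1 : (U₀ ⊔ Q) ⊓ Wsub = U₀ ⊔ (Q ⊓ Wsub) := sup_inf_assoc_of_le Q hU₀le
        rw [codisjoint_iff.mp hQcompl.codisjoint] at h1
        rw [hT, ← h1, top_inf_eq]
      have hranks : Module.finrank ℂ U₀ + Module.finrank ℂ T = n := by
        have := Submodule.finrank_sup_add_finrank_inf_eq U₀ T
        rw [hsupT, hU₀T, hrank] at this
        simpa using this.symm
      have hU₀pos : 0 < Module.finrank ℂ U₀ :=
        Nat.pos_of_ne_zero fun h => hU₀ne (Submodule.finrank_eq_zero.mp h)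
      have hTlt : Module.finrank ℂ T < n := by omega
      obtain ⟨k, U', hU'inv, hU'le, hU'ind, hU'sup, hU'irr⟩ := IH _ hTlt T rfl hTinv
      refine ⟨k + 1, Fin.cons U₀ U',
        fun i => Fin.cases hU₀inv (fun j => hU'inv j) i, ?_, ?_, ?_, ?_⟩
      · intro i
        induction i using Fin.cases with
        | zero => simpa using hU₀le
        | succ j => simpa using (hU'le j).trans hTle
      · rw [iSupIndep_def]
        intro i
        induction i using Fin.cases with
        | zero =>
          have hle : (⨆ j, ⨆ (_ : j ≠ 0), Fin.cons U₀ U' j) ≤ T := by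
            refine iSup₂_le fun j hj => ?_
            obtain ⟨j', rfl⟩ := Fin.eq_succ_of_ne_zero hj
            simpa using hU'le j'
          exact (disjoint_iff.mpr hU₀T).mono_right hle
        | succ i' =>
          set S : Submodule ℂ V := ⨆ j, ⨆ (_ : j ≠ i'), U' j with hS
          have hSle : S ≤ T := iSup₂_le fun j _ => hU'le j
          have hle : (⨆ j, ⨆ (_ : j ≠ i'.succ), Fin.cons U₀ U' j) ≤ U₀ ⊔ S := by
            refine iSup₂_le fun j hj => ?_
            by_cases hj0 : j = 0
            · subst hj0
              simpa using le_sup_left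
            · obtain ⟨j', rfl⟩ := Fin.eq_succ_of_ne_zero hj0
              have hj' : j' ≠ i' := fun h => hj (by rw [h])
              have : U' j' ≤ S := le_iSup₂ (f := fun j _ => U' j) j' hj'
              simpa using this.trans le_sup_right
          refine Disjoint.mono_right hle ?_
          rw [Fin.cons_succ, disjoint_iff, eq_bot_iff]
          rintro v ⟨hv1, hv2⟩
          rw [SetLike.mem_coe, Submodule.mem_sup] at hv2
          obtain ⟨a, ha, s, hs, rfl⟩ := hv2
          have haT : a ∈ T := by
            have h1 : a + s ∈ T := hU'le i' hv1
            have h2 : s ∈ T := hSle hs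
            simpa using T.sub_mem h1 h2
          have ha0 : a = 0 := by
            have : a ∈ U₀ ⊓ T := ⟨ha, haT⟩
            rw [hU₀T] at this
            simpa using this
          subst ha0
          rw [zero_add] at hv1 ⊢
          have : s ∈ U' i' ⊓ S := ⟨hv1, hs⟩
          have hd := hU'ind i'
          rw [disjoint_iff] at hd
          rw [hd] at this
          exact this
      · apply le_antisymm
        · refine iSup_le fun i => ?_
          induction i using Fin.cases with
          | zero => simpa using hU₀le
          | succ j => simpa using (hU'le j).trans hTle
        · rw [← hsupT]
          refine sup_le ?_ ?_
          · have := le_iSup (Fin.cons U₀ U') 0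
            simpa using this
          · rw [← hU'sup]
            refine iSup_le fun j => ?_
            have := le_iSup (Fin.cons U₀ U') j.succ
            simpa using this
      · intro i
        induction i using Fin.cases with
        | zero => exact hirr
        | succ j => exact hU'irr j

lemma exists_irred_decomp (π : Representation ℂ H V) :
    ∃ (k : ℕ) (U : Fin k → Submodule ℂ V)
      (hU : ∀ i, ∀ g, ∀ v ∈ U i, π g v ∈ U i),
      iSupIndep U ∧ (⨆ i, U i) = ⊤ ∧
        ∀ i, IsIrreducibleRep (resSub π (U i) (hU i)) := by
  obtain ⟨k, U, hU, _, hind, hsup, hirr⟩ :=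
    exists_irred_decomp_aux π (Module.finrank ℂ (⊤ : Submodule ℂ V)) ⊤ rfl
      (fun g v _ => trivial)
  exact ⟨k, U, hU, hind, hsup, hirr⟩

end Decomp

section Projections

variable {H : Type*} [Group H] {V : Type*} [AddCommGroup V] [Module ℂ V]

/-- For a pair of invariant complementary submodules, the linear projection is
equivariant. -/
lemma pair_proj_equivariant (π : Representation ℂ H V) {U₁ U₂ : Submodule ℂ V}
    (h₁ : ∀ g, ∀ v ∈ U₁, π g v ∈ U₁) (h₂ : ∀ g, ∀ v ∈ U₂, π g v ∈ U₂)
    (hc : IsCompl U₁ U₂) (g : H) (v : V) :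
    (U₁.linearProjOfIsCompl U₂ hc (π g v) : V) = π g (U₁.linearProjOfIsCompl U₂ hc v : V) := by
  set p := U₁.linearProjOfIsCompl U₂ hc
  set q := U₂.linearProjOfIsCompl U₁ hc.symm
  have hv : (p v : V) + (q v : V) = v := Submodule.projection_add_projection_eq_self hc v
  have hsplit : π g v = π g (p v : V) + π g (q v : V) := by
    rw [← map_add, hv]
  rw [hsplit, map_add]
  have e1 : p (π g (p v : V)) = ⟨π g (p v : V), h₁ g _ (p v).2⟩ :=
    Submodule.linearProjOfIsCompl_apply_left hc ⟨π g (p v : V), h₁ g _ (p v).2⟩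
  have e2 : p (π g (q v : V)) = 0 :=
    Submodule.linearProjOfIsCompl_apply_right hc ⟨π g (q v : V), h₂ g _ (q v).2⟩
  rw [e1, e2]
  simp

variable {k : ℕ} {U : Fin k → Submodule ℂ V}

lemma decomp_isCompl (hind : iSupIndep U) (hsup : ⨆ i, U i = ⊤) (i : Fin k) :
    IsCompl (U i) (⨆ j, ⨆ (_ : j ≠ i), U j) := by
  constructor
  · exact hind i
  · rw [codisjoint_iff, eq_top_iff, ← hsup]
    refine iSup_le fun j => ?_
    by_cases hj : j = i
    · subst hj; exact le_sup_left
    · exact le_trans (le_iSup₂ (f := fun j _ => U j) j hj) le_sup_right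

/-- The projection onto the `i`-th component of an internal decomposition. -/
def decompPrj (hind : iSupIndep U) (hsup : ⨆ i, U i = ⊤) (i : Fin k) : V →ₗ[ℂ] U i :=
  (U i).linearProjOfIsCompl _ (decomp_isCompl hind hsup i)

lemma decompPrj_left (hind : iSupIndep U) (hsup : ⨆ i, U i = ⊤) (i : Fin k) (x : U i) : decompPrj hind hsup i (x : V) = x :=
  Submodule.linearProjOfIsCompl_apply_left _ x

lemma decompPrj_other (hind : iSupIndep U) (hsup : ⨆ i, U i = ⊤) {i j : Fin k} (hij : j ≠ i)
    {x : V} (hx : x ∈ U j) :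
    decompPrj hind hsup i x = 0 := by
  have hx' : x ∈ ⨆ j, ⨆ (_ : j ≠ i), U j := le_iSup₂ (f := fun j _ => U j) j hij hx
  exact Submodule.linearProjOfIsCompl_apply_right _ ⟨x, hx'⟩

lemma decompPrj_sum (hind : iSupIndep U) (hsup : ⨆ i, U i = ⊤) (v : V) : ∑ i, (decompPrj hind hsup i v : V) = v := by
  have hv : v ∈ ⨆ i, U i := by rw [hsup]; trivial
  refine Submodule.iSup_induction U hv (motive := fun v => ∑ i, (decompPrj hind hsup i v : V) = v)
    ?_ ?_ ?_
  · intro i x hx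
    rw [Finset.sum_eq_single i]
    · rw [decompPrj_left hind hsup i ⟨x, hx⟩]
    · intro j _ hj
      rw [decompPrj_other hind hsup hj.symm hx, Submodule.coe_zero]
    · intro h; exact absurd (Finset.mem_univ i) h
  · simp
  · intro x y hx hy
    simp only [map_add, Submodule.coe_add, Finset.sum_add_distrib, hx, hy]

lemma decompPrj_equivariant {π : Representation ℂ H V} (hind : iSupIndep U)
    (hsup : ⨆ i, U i = ⊤) (hU : ∀ i, ∀ g, ∀ v ∈ U i, π g v ∈ U i)
    (i : Fin k) (g : H) (v : V) :
    (decompPrj hind hsup i (π g v) : V) = π g (decompPrj hind hsup i v : V) := by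
  have hv := decompPrj_sum hind hsup v
  have h1 : π g v = ∑ j, π g (decompPrj hind hsup j v : V) := by
    rw [← map_sum, hv]
  rw [h1, map_sum, Submodule.coe_sum]
  rw [Finset.sum_eq_single i]
  · exact congrArg Subtype.val
      (decompPrj_left hind hsup i ⟨π g _, hU i g _ (decompPrj hind hsup i v).2⟩)
  · intro j _ hj
    rw [decompPrj_other hind hsup hj (hU j g _ (decompPrj hind hsup j v).2), Submodule.coe_zero]
  · intro h; exact absurd (Finset.mem_univ i) h

lemma finrank_equivariantHoms_self_eq_sum [FiniteDimensional ℂ V] (π : Representation ℂ H V)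
    (hU : ∀ i, ∀ g, ∀ v ∈ U i, π g v ∈ U i) (hind : iSupIndep U) (hsup : ⨆ i, U i = ⊤) :
    Module.finrank ℂ (equivariantHoms π π) =
      ∑ p : Fin k × Fin k, Module.finrank ℂ
        (equivariantHoms (resSub π (U p.1) (hU p.1)) (resSub π (U p.2) (hU p.2))) := by
  classical
  set prj := fun i => decompPrj hind hsup i with hprj
  -- the comparison map
  have hmem : ∀ (f : equivariantHoms π π) (i j : Fin k),
      (prj j) ∘ₗ ((f : V →ₗ[ℂ] V) ∘ₗ (U i).subtype) ∈
        equivariantHoms (resSub π (U i) (hU i)) (resSub π (U j) (hU j)) := by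
    intro f i j g x
    have hf : ∀ g v, (f : V →ₗ[ℂ] V) (π g v) = π g ((f : V →ₗ[ℂ] V) v) := f.2
    apply Subtype.ext
    simp only [LinearMap.comp_apply, Submodule.coe_subtype, resSub_apply]
    rw [hf]
    exact decompPrj_equivariant hind hsup hU j g _
  set Φ : equivariantHoms π π →ₗ[ℂ]
      ((p : Fin k × Fin k) → equivariantHoms (resSub π (U p.1) (hU p.1))
        (resSub π (U p.2) (hU p.2))) :=
    { toFun := fun f => fun p => ⟨(prj p.2) ∘ₗ ((f : V →ₗ[ℂ] V) ∘ₗ (U p.1).subtype),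
        hmem f p.1 p.2⟩
      map_add' := by
        intro f₁ f₂
        funext p
        refine Subtype.ext (LinearMap.ext fun x => Subtype.ext ?_)
        simp [Submodule.coe_add, LinearMap.add_apply]
      map_smul' := by
        intro c f
        funext p
        refine Subtype.ext (LinearMap.ext fun x => Subtype.ext ?_)
        simp [Submodule.coe_smul, LinearMap.smul_apply] } with hΦ
  have hinj : Function.Injective Φ := by
    intro f₁ f₂ hf
    apply Subtype.ext
    ext v
    have key : ∀ (f : equivariantHoms π π) (v : V),
        (f : V →ₗ[ℂ] V) v = ∑ i, ∑ j, ((prj j ((f : V →ₗ[ℂ] V) ((prj i v : V)))) : V) := by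
      intro f v
      conv_lhs => rw [← decompPrj_sum hind hsup v, map_sum]
      refine Finset.sum_congr rfl fun i _ => ?_
      exact (decompPrj_sum hind hsup _).symm
    rw [key f₁ v, key f₂ v]
    refine Finset.sum_congr rfl fun i _ => ?_
    refine Finset.sum_congr rfl fun j _ => ?_
    have h3 := LinearMap.congr_fun (congrArg Subtype.val (congrFun hf (i, j))) (prj i v)
    exact congrArg Subtype.val h3
  have hsurj : Function.Surjective Φ := by
    intro F
    have hfmem : (∑ p : Fin k × Fin k,
        (U p.2).subtype ∘ₗ (F p : U p.1 →ₗ[ℂ] U p.2) ∘ₗ prj p.1) ∈ equivariantHoms π π := by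
      intro g v
      simp only [LinearMap.sum_apply, map_sum]
      refine Finset.sum_congr rfl fun p _ => ?_
      simp only [LinearMap.comp_apply, Submodule.coe_subtype]
      have h1 : prj p.1 (π g v) = resSub π (U p.1) (hU p.1) g (prj p.1 v) :=
        Subtype.ext (decompPrj_equivariant hind hsup hU p.1 g v)
      rw [h1, (F p).2 g (prj p.1 v)]
      rfl
    refine ⟨⟨∑ p : Fin k × Fin k,
        (U p.2).subtype ∘ₗ (F p : U p.1 →ₗ[ℂ] U p.2) ∘ₗ prj p.1, hfmem⟩, ?_⟩
    funext q
    apply Subtype.ext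
    ext x
    simp only [hΦ, LinearMap.coe_mk, AddHom.coe_mk, LinearMap.comp_apply,
      Submodule.coe_subtype, LinearMap.sum_apply, map_sum, Submodule.coe_sum]
    have hterm : ∀ p : Fin k × Fin k,
        (↑(prj q.2 (↑((F p : U p.1 →ₗ[ℂ] U p.2) (prj p.1 (x : V))) : V)) : V) =
          if p = q then (↑((F q : U q.1 →ₗ[ℂ] U q.2) x) : V) else 0 := by
      intro p
      by_cases hp1 : p.1 = q.1
      · by_cases hp2 : p.2 = q.2
        · have hpq : p = q := Prod.ext hp1 hp2
          subst hpq
          rw [if_pos rfl, decompPrj_left hind hsup p.1 x]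
          exact congrArg Subtype.val (decompPrj_left hind hsup p.2 _)
        · rw [if_neg (fun h => hp2 (by rw [h]))]
          rw [decompPrj_other hind hsup hp2
            ((F p : U p.1 →ₗ[ℂ] U p.2) (prj p.1 (x : V))).2, Submodule.coe_zero]
      · rw [if_neg (fun h => hp1 (by rw [h]))]
        have hz : prj p.1 (x : V) = 0 :=
          decompPrj_other hind hsup (fun h => hp1 h.symm) x.2
        rw [hz]
        simp
    rw [Finset.sum_congr rfl (fun p _ => hterm p)]
    simp
  have := LinearEquiv.finrank_eq (LinearEquiv.ofBijective Φ ⟨hinj, hsurj⟩)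
  rw [this]
  rw [Module.finrank_pi_fintype]

end Projections

section ConjOps

variable {H : Type*} [Group H] {V : Type*} [AddCommGroup V] [Module ℂ V]

lemma rep_mul_apply (π : Representation ℂ H V) (g h : H) (v : V) :
    π (g * h) v = π g (π h v) := by rw [map_mul]; rfl

/-- Conjugation action of `g` on linear endomorphisms. -/
def conjT (π : Representation ℂ H V) (g : H) : (V →ₗ[ℂ] V) →ₗ[ℂ] (V →ₗ[ℂ] V) where
  toFun f := π g ∘ₗ f ∘ₗ π g⁻¹
  map_add' f₁ f₂ := by ext v; simp
  map_smul' c f := by ext v; simp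

@[simp] lemma conjT_apply (π : Representation ℂ H V) (g : H) (f : V →ₗ[ℂ] V) (v : V) :
    conjT π g f v = π g (f (π g⁻¹ v)) := rfl

lemma conjT_conjT (π : Representation ℂ H V) (g h : H) (f : V →ₗ[ℂ] V) :
    conjT π g (conjT π h f) = conjT π (g * h) f := by
  ext v
  simp only [conjT_apply]
  simp only [mul_inv_rev, rep_mul_apply]

lemma conjT_eq_smul_iff (π : Representation ℂ H V) (g : H) (f : V →ₗ[ℂ] V) {c : ℂ}
    (hc : c * c = 1) :
    conjT π g f = c • f ↔ ∀ v, f (π g v) = c • π g (f v) := by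
  constructor
  · intro h v
    have h1 := congrArg (fun F : V →ₗ[ℂ] V => F (π g v)) h
    simp only [conjT_apply, LinearMap.smul_apply] at h1
    have h2 : π g⁻¹ (π g v) = v := by
      rw [← rep_mul_apply, inv_mul_cancel, map_one, Module.End.one_apply]
    rw [h2] at h1
    calc f (π g v) = (c * c) • f (π g v) := by rw [hc, one_smul]
      _ = c • (c • f (π g v)) := by rw [mul_smul]
      _ = c • π g (f v) := by rw [← h1]
  · intro h
    ext v
    simp only [conjT_apply, LinearMap.smul_apply]
    have h1 := h (π g⁻¹ v)
    have h2 : π g (π g⁻¹ v) = v := by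
      rw [← rep_mul_apply, mul_inv_cancel, map_one, Module.End.one_apply]
    rw [h2] at h1
    calc π g (f (π g⁻¹ v)) = (c * c) • π g (f (π g⁻¹ v)) := by rw [hc, one_smul]
      _ = c • (c • π g (f (π g⁻¹ v))) := by rw [mul_smul]
      _ = c • f v := by rw [← h1]

lemma mem_ker_conjT_iff (π : Representation ℂ H V) (g : H) (f : V →ₗ[ℂ] V) {c : ℂ}
    (hc : c * c = 1) :
    f ∈ LinearMap.ker (conjT π g - c • LinearMap.id) ↔
      ∀ v, f (π g v) = c • π g (f v) := by
  rw [LinearMap.mem_ker, LinearMap.sub_apply, LinearMap.smul_apply, LinearMap.id_apply,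
    sub_eq_zero]
  exact conjT_eq_smul_iff π g f hc

/-- Splitting of the dimension of an invariant subspace under an involution. -/
lemma finrank_inf_ker_split {X : Type*} [AddCommGroup X] [Module ℂ X] [FiniteDimensional ℂ X]
    (S : X →ₗ[ℂ] X) (A : Submodule ℂ X) (hmap : ∀ x ∈ A, S x ∈ A)
    (hsq : ∀ x ∈ A, S (S x) = x) :
    Module.finrank ℂ A =
      Module.finrank ℂ (A ⊓ LinearMap.ker (S - (1 : ℂ) • LinearMap.id) : Submodule ℂ X) +
      Module.finrank ℂ (A ⊓ LinearMap.ker (S - (-1 : ℂ) • LinearMap.id) : Submodule ℂ X) := by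
  set Ap := A ⊓ LinearMap.ker (S - (1 : ℂ) • LinearMap.id) with hAp
  set Am := A ⊓ LinearMap.ker (S - (-1 : ℂ) • LinearMap.id) with hAm
  have hmemp : ∀ x, x ∈ Ap ↔ x ∈ A ∧ S x = x := by
    intro x
    rw [hAp, Submodule.mem_inf, LinearMap.mem_ker]
    constructor
    · rintro ⟨h1, h2⟩
      refine ⟨h1, ?_⟩
      have : S x - (1 : ℂ) • x = 0 := h2
      rw [one_smul, sub_eq_zero] at this
      exact this
    · rintro ⟨h1, h2⟩
      refine ⟨h1, ?_⟩
      show S x - (1 : ℂ) • x = 0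
      rw [one_smul, h2, sub_self]
  have hmemm : ∀ x, x ∈ Am ↔ x ∈ A ∧ S x = -x := by
    intro x
    rw [hAm, Submodule.mem_inf, LinearMap.mem_ker]
    constructor
    · rintro ⟨h1, h2⟩
      refine ⟨h1, ?_⟩
      have : S x - (-1 : ℂ) • x = 0 := h2
      rw [neg_smul, one_smul, sub_neg_eq_add] at this
      linear_combination (norm := module) this
    · rintro ⟨h1, h2⟩
      refine ⟨h1, ?_⟩
      show S x - (-1 : ℂ) • x = 0
      rw [neg_smul, one_smul, sub_neg_eq_add, h2]
      abel
  have hinf : Ap ⊓ Am = ⊥ := by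
    rw [eq_bot_iff]
    intro x hx
    have h1 := (hmemp x).mp hx.1
    have h2 := (hmemm x).mp hx.2
    have hxneg : x = -x := by
      conv_lhs => rw [← h1.2]
      exact h2.2
    have h3 : (2 : ℂ) • x = 0 := by
      have := eq_neg_iff_add_eq_zero.mp hxneg
      rw [two_smul]
      exact this
    have h4 : x = 0 := by
      have := smul_eq_zero.mp h3
      rcases this with h | h
      · norm_num at h
      · exact h
    simp [h4]
  have hsup : Ap ⊔ Am = A := by
    apply le_antisymm
    · exact sup_le inf_le_left inf_le_left
    · intro x hx
      rw [Submodule.mem_sup]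
      refine ⟨(2⁻¹ : ℂ) • (x + S x), ?_, (2⁻¹ : ℂ) • (x - S x), ?_, ?_⟩
      · rw [hmemp]
        constructor
        · exact A.smul_mem _ (A.add_mem hx (hmap x hx))
        · rw [map_smul, map_add, hsq x hx]
          rw [add_comm]
      · rw [hmemm]
        constructor
        · exact A.smul_mem _ (A.sub_mem hx (hmap x hx))
        · rw [map_smul, map_sub, hsq x hx]
          module
      · match_scalars <;> norm_num
  have := Submodule.finrank_sup_add_finrank_inf_eq Ap Am
  rw [hsup, hinf, finrank_bot] at this
  omega

/-- Twisting preserves irreducibility. -/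
lemma twist_irred {π : Representation ℂ H V} (hπ : IsIrreducibleRep π) (χ : H →* ℂˣ) :
    IsIrreducibleRep (twist π χ) := by
  refine ⟨hπ.1, fun U hU => ?_⟩
  apply hπ.2
  intro g v hv
  have := hU g v hv
  rw [twist_apply] at this
  have h2 : π g v = ((χ g : ℂ))⁻¹ • ((χ g : ℂ) • π g v) := by
    rw [smul_smul, inv_mul_cancel₀ (Units.ne_zero (χ g)), one_smul]
  rw [h2]
  exact U.smul_mem _ this

lemma isRepEquiv_twist_one (π : Representation ℂ H V) :
    IsRepEquiv π (twist π (1 : H →* ℂˣ)) := by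
  refine ⟨LinearEquiv.refl ℂ V, fun g v => ?_⟩
  simp

lemma isRepEquiv_twist_mul {π : Representation ℂ H V} {χ₁ χ₂ : H →* ℂˣ}
    (h₁ : IsRepEquiv π (twist π χ₁)) (h₂ : IsRepEquiv π (twist π χ₂)) :
    IsRepEquiv π (twist π (χ₁ * χ₂)) := by
  obtain ⟨e₁, he₁⟩ := h₁
  obtain ⟨e₂, he₂⟩ := h₂
  refine ⟨e₁.trans e₂, fun g v => ?_⟩
  simp only [LinearEquiv.trans_apply, twist_apply]
  rw [he₁]
  simp only [twist_apply]
  rw [map_smul, he₂]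
  simp only [twist_apply, MonoidHom.mul_apply, Units.val_mul, mul_smul]

end ConjOps

section DimFour

variable {G : Type*} [Group G] {V : Type*} [AddCommGroup V] [Module ℂ V]

lemma finrank_endN_eq_four [Finite G] (N : Subgroup G) [N.Normal]
    (hquot : Nonempty ((G ⧸ N) ≃* Multiplicative (ZMod 2) × Multiplicative (ZMod 2)))
    (ω₁ ω₂ : G →* ℂˣ) (hne : ω₁ ≠ ω₂) (hω₁ : ω₁ ≠ 1) (hω₂ : ω₂ ≠ 1)
    (hω₁N : ∀ n ∈ N, ω₁ n = 1) (hω₂N : ∀ n ∈ N, ω₂ n = 1)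
    [FiniteDimensional ℂ V] (π : Representation ℂ G V) (hπ : IsIrreducibleRep π)
    (h₁ : IsRepEquiv π (twist π ω₁)) (h₂ : IsRepEquiv π (twist π ω₂)) :
    Module.finrank ℂ (equivariantHoms (π.comp N.subtype) (π.comp N.subtype)) = 4 := by
  classical
  have hsq : ∀ g : G, g * g ∈ N := by
    intro g
    obtain ⟨e⟩ := hquot
    have hmm : ∀ m : Multiplicative (ZMod 2) × Multiplicative (ZMod 2), m * m = 1 := by decide
    have h1 : ((g : G ⧸ N) * (g : G ⧸ N)) = 1 := by
      apply e.injective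
      rw [map_mul, map_one]
      exact hmm _
    rwa [← QuotientGroup.mk_mul, QuotientGroup.eq_one_iff] at h1
  have hval : ∀ ω : G →* ℂˣ, (∀ n ∈ N, ω n = 1) → ∀ g, ω g = 1 ∨ ω g = (-1 : ℂˣ) := by
    intro ω hN g
    have h2 : ω g * ω g = 1 := by rw [← map_mul]; exact hN _ (hsq g)
    have h3 : (ω g : ℂ) * (ω g : ℂ) = 1 := by simpa using congrArg Units.val h2
    rcases mul_self_eq_one_iff.mp h3 with h | h
    · left; exact Units.ext (by rw [h]; simp)
    · right; exact Units.ext (by rw [h]; simp)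
  have hg : ∃ g₁ g₂ : G, ω₁ g₁ = (-1 : ℂˣ) ∧ ω₂ g₁ = 1 ∧ ω₁ g₂ = 1 ∧ ω₂ g₂ = (-1 : ℂˣ) := by
    obtain ⟨c, hc⟩ : ∃ c, ω₁ c ≠ ω₂ c := by
      by_contra h; push_neg at h; exact hne (MonoidHom.ext h)
    have hA : ∃ a, ω₁ a = (-1 : ℂˣ) := by
      by_contra h
      push_neg at h
      apply hω₁
      refine MonoidHom.ext fun a => ?_
      rw [MonoidHom.one_apply]
      rcases hval ω₁ hω₁N a with h1 | h1
      · exact h1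
      · exact absurd h1 (h a)
    have hB : ∃ b, ω₂ b = (-1 : ℂˣ) := by
      by_contra h
      push_neg at h
      apply hω₂
      refine MonoidHom.ext fun b => ?_
      rw [MonoidHom.one_apply]
      rcases hval ω₂ hω₂N b with h1 | h1
      · exact h1
      · exact absurd h1 (h b)
    rcases hval ω₁ hω₁N c with hc1 | hc1 <;> rcases hval ω₂ hω₂N c with hc2 | hc2
    · exact absurd (hc1.trans hc2.symm) hc
    · obtain ⟨a, ha⟩ := hA
      rcases hval ω₂ hω₂N a with ha2 | ha2
      · exact ⟨a, c, ha, ha2, hc1, hc2⟩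
      · refine ⟨c * a, c, ?_, ?_, hc1, hc2⟩
        · rw [map_mul, hc1, ha, one_mul]
        · rw [map_mul, hc2, ha2]
          simp
    · obtain ⟨b, hb⟩ := hB
      rcases hval ω₁ hω₁N b with hb1 | hb1
      · exact ⟨c, b, hc1, hc2, hb1, hb⟩
      · refine ⟨c, c * b, hc1, hc2, ?_, ?_⟩
        · rw [map_mul, hb1, hc1]
          simp
        · rw [map_mul, hc2, hb, one_mul]
    · exact absurd (hc1.trans hc2.symm) hc
  obtain ⟨g₁, g₂, hg11, hg21, hg12, hg22⟩ := hg
  -- the kernel of (ω₁, ω₂) is exactly N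
  set φ : G →* ℂˣ × ℂˣ := ω₁.prod ω₂ with hφdef
  have hNK : N ≤ φ.ker := by
    intro n hn
    rw [MonoidHom.mem_ker]
    exact Prod.ext (hω₁N n hn) (hω₂N n hn)
  have hiN : N.index = 4 := by
    obtain ⟨e⟩ := hquot
    rw [Subgroup.index, Nat.card_congr e.toEquiv]
    simp [Nat.card_eq_fintype_card]
  have hw : ∀ i : Fin 4, φ (![1, g₁, g₂, g₁ * g₂] i) =
      ![((1 : ℂˣ), (1 : ℂˣ)), (-1, 1), (1, -1), (-1, -1)] i := by
    intro i
    fin_cases i <;> rw [hφdef] <;>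
      simp [MonoidHom.prod_apply, hg11, hg21, hg12, hg22, Prod.ext_iff]
  have hne1 : (-1 : ℂˣ) ≠ 1 := by
    intro h
    have := congrArg Units.val h
    norm_num at this
  have hinjphi : Function.Injective
      (fun i : Fin 4 => ((![1, g₁, g₂, g₁ * g₂] i : G) : G ⧸ φ.ker)) := by
    intro i j hij
    have h2 : φ ((![1, g₁, g₂, g₁ * g₂] i)⁻¹ * ![1, g₁, g₂, g₁ * g₂] j) = 1 :=
      QuotientGroup.eq.mp hij
    rw [map_mul, map_inv, inv_mul_eq_one] at h2
    rw [hw i, hw j] at h2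
    fin_cases i <;> fin_cases j <;>
      first
        | rfl
        | (exfalso; simp [Prod.ext_iff, Units.ext_iff] at h2 <;> norm_num at h2)
  have hK4 : 4 ≤ φ.ker.index := by
    have hcard := Nat.card_le_card_of_injective _ hinjphi
    rw [Subgroup.index]
    simpa using hcard
  have hrel := Subgroup.relIndex_mul_index hNK
  rw [hiN] at hrel
  have hr2 : N.relIndex φ.ker < 2 := by
    by_contra h
    push_neg at h
    have h3 : 2 * 4 ≤ N.relIndex φ.ker * φ.ker.index := Nat.mul_le_mul h hK4
    rw [hrel] at h3
    omega
  have hr0 : N.relIndex φ.ker ≠ 0 := by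
    intro h0
    rw [h0, zero_mul] at hrel
    exact absurd hrel (by norm_num)
  have hKN : φ.ker ≤ N := Subgroup.relIndex_eq_one.mp (by omega)
  have hker : ∀ x : G, ω₁ x = 1 → ω₂ x = 1 → x ∈ N := by
    intro x hx1 hx2
    exact hKN (by rw [MonoidHom.mem_ker]; exact Prod.ext hx1 hx2)
  -- the space W of N-equivariant endomorphisms
  set W := equivariantHoms (π.comp N.subtype) (π.comp N.subtype) with hWdef
  have hWmem : ∀ f : V →ₗ[ℂ] V, f ∈ W ↔ ∀ n ∈ N, ∀ v, f (π n v) = π n (f v) := by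
    intro f
    constructor
    · intro hf n hn v
      exact hf ⟨n, hn⟩ v
    · intro hf x v
      exact hf x x.2 v
  have hconjN : ∀ f ∈ W, ∀ x ∈ N, conjT π x f = f := by
    intro f hf x hx
    ext v
    rw [conjT_apply]
    have h1 := (hWmem f).mp hf x hx (π x⁻¹ v)
    rw [← rep_mul_apply, mul_inv_cancel, map_one, Module.End.one_apply] at h1
    exact h1.symm
  have hmapsW : ∀ g : G, ∀ f ∈ W, conjT π g f ∈ W := by
    intro g f hf
    rw [hWmem]
    intro n hn v
    rw [conjT_apply, conjT_apply]
    have hm : g⁻¹ * n * g ∈ N := Subgroup.Normal.conj_mem' ‹N.Normal› n hn g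
    have e1 : π g⁻¹ (π n v) = π (g⁻¹ * n * g) (π g⁻¹ v) := by
      rw [← rep_mul_apply, ← rep_mul_apply]
      have : g⁻¹ * n = g⁻¹ * n * g * g⁻¹ := by group
      rw [← this]
    rw [e1, (hWmem f).mp hf _ hm]
    rw [← rep_mul_apply, ← rep_mul_apply]
    have : g * (g⁻¹ * n * g) = n * g := by group
    rw [this]
  have hkey : ∀ f ∈ W, ∀ x y : G, x⁻¹ * y ∈ N → conjT π y f = conjT π x f := by
    intro f hf x y hxy
    have hy : y = x * (x⁻¹ * y) := by group
    rw [hy, ← conjT_conjT, hconjN f hf _ hxy]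
  have hcommT : ∀ f ∈ W, conjT π g₁ (conjT π g₂ f) = conjT π g₂ (conjT π g₁ f) := by
    intro f hf
    rw [conjT_conjT, conjT_conjT]
    apply hkey f hf
    apply hker
    · rw [map_mul, map_inv, map_mul, map_mul, hg11, hg12]
      simp
    · rw [map_mul, map_inv, map_mul, map_mul, hg21, hg22]
      simp
  have hsqT : ∀ g : G, ∀ f ∈ W, conjT π g (conjT π g f) = f := by
    intro g f hf
    rw [conjT_conjT]
    exact hconjN f hf _ (hsq g)
  -- identification of joint eigenspaces with twisted hom spaces
  have heq : ∀ (χ : G →* ℂˣ) (c₁ c₂ : ℂ), (∀ n ∈ N, χ n = 1) →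
      (χ g₁ : ℂ) = c₁ → (χ g₂ : ℂ) = c₂ → c₁ * c₁ = 1 → c₂ * c₂ = 1 →
      ((W ⊓ LinearMap.ker (conjT π g₁ - c₁ • LinearMap.id)) ⊓
          LinearMap.ker (conjT π g₂ - c₂ • LinearMap.id))
        = equivariantHoms π (twist π χ) := by
    intro χ c₁ c₂ hχN hχ1 hχ2 hc₁ hc₂
    ext f
    simp only [Submodule.mem_inf]
    constructor
    · rintro ⟨⟨hfW, hf1⟩, hf2⟩
      rw [mem_ker_conjT_iff π g₁ f hc₁] at hf1
      rw [mem_ker_conjT_iff π g₂ f hc₂] at hf2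
      have hmulR : ∀ (x y : G) (a b : ℂ), (∀ v, f (π x v) = a • π x (f v)) →
          (∀ v, f (π y v) = b • π y (f v)) →
          ∀ v, f (π (x * y) v) = (a * b) • π (x * y) (f v) := by
        intro x y a b hx hy v
        rw [rep_mul_apply, hx, hy, map_smul, rep_mul_apply, mul_smul]
      have hNR : ∀ x ∈ N, ∀ v, f (π x v) = (1 : ℂ) • π x (f v) := by
        intro x hx v
        rw [one_smul]
        exact (hWmem f).mp hfW x hx v
      intro g v
      rw [twist_apply]
      rcases hval ω₁ hω₁N g with hv1 | hv1 <;> rcases hval ω₂ hω₂N g with hv2 | hv2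
      · -- g ∈ N
        have hgN : g ∈ N := hker g hv1 hv2
        rw [hχN g hgN, Units.val_one, one_smul]
        exact (hWmem f).mp hfW g hgN v
      · -- decompose through g₂
        have hxmem : g₂⁻¹ * g ∈ N := by
          apply hker
          · rw [map_mul, map_inv, hg12, hv1]; simp
          · rw [map_mul, map_inv, hg22, hv2]; simp
        have hR := hmulR g₂ (g₂⁻¹ * g) c₂ 1 hf2 (hNR _ hxmem)
        have hg' : g₂ * (g₂⁻¹ * g) = g := by group
        rw [hg'] at hR
        have hcv : (χ g : ℂ) = c₂ * 1 := by
          have h5 : χ g = χ g₂ * χ (g₂⁻¹ * g) := by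
            rw [← map_mul, hg']
          rw [h5, Units.val_mul, hχ2, hχN _ hxmem, Units.val_one]
        rw [hcv]
        exact hR v
      · -- decompose through g₁
        have hxmem : g₁⁻¹ * g ∈ N := by
          apply hker
          · rw [map_mul, map_inv, hg11, hv1]; simp
          · rw [map_mul, map_inv, hg21, hv2]; simp
        have hR := hmulR g₁ (g₁⁻¹ * g) c₁ 1 hf1 (hNR _ hxmem)
        have hg' : g₁ * (g₁⁻¹ * g) = g := by group
        rw [hg'] at hR
        have hcv : (χ g : ℂ) = c₁ * 1 := by
          have h5 : χ g = χ g₁ * χ (g₁⁻¹ * g) := by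
            rw [← map_mul, hg']
          rw [h5, Units.val_mul, hχ1, hχN _ hxmem, Units.val_one]
        rw [hcv]
        exact hR v
      · -- decompose through g₁ * g₂
        have hxmem : (g₁ * g₂)⁻¹ * g ∈ N := by
          apply hker
          · rw [map_mul, map_inv, map_mul, hg11, hg12, hv1]; simp
          · rw [map_mul, map_inv, map_mul, hg21, hg22, hv2]; simp
        have hR12 := hmulR g₁ g₂ c₁ c₂ hf1 hf2
        have hR := hmulR (g₁ * g₂) ((g₁ * g₂)⁻¹ * g) (c₁ * c₂) 1 hR12 (hNR _ hxmem)
        have hg' : g₁ * g₂ * ((g₁ * g₂)⁻¹ * g) = g := by group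
        rw [hg'] at hR
        have hcv : (χ g : ℂ) = c₁ * c₂ * 1 := by
          have h5 : χ g = χ g₁ * χ g₂ * χ ((g₁ * g₂)⁻¹ * g) := by
            rw [← map_mul, ← map_mul, hg']
          rw [h5, Units.val_mul, Units.val_mul, hχ1, hχ2, hχN _ hxmem, Units.val_one]
        rw [hcv]
        exact hR v
    · intro hf
      have hf' : ∀ g v, f (π g v) = (χ g : ℂ) • π g (f v) := fun g v => hf g v
      refine ⟨⟨?_, ?_⟩, ?_⟩
      · rw [hWmem]
        intro n hn v
        rw [hf' n v, hχN n hn, Units.val_one, one_smul]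
      · rw [mem_ker_conjT_iff π g₁ f hc₁]
        intro v
        rw [hf' g₁ v, hχ1]
      · rw [mem_ker_conjT_iff π g₂ f hc₂]
        intro v
        rw [hf' g₂ v, hχ2]
  -- the four twisted hom spaces have dimension 1
  have hd1 : Module.finrank ℂ (equivariantHoms π (twist π (1 : G →* ℂˣ))) = 1 :=
    finrank_equivariantHoms_eq_one hπ (isRepEquiv_twist_one π)
  have hdω₁ : Module.finrank ℂ (equivariantHoms π (twist π ω₁)) = 1 :=
    finrank_equivariantHoms_eq_one hπ h₁
  have hdω₂ : Module.finrank ℂ (equivariantHoms π (twist π ω₂)) = 1 :=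
    finrank_equivariantHoms_eq_one hπ h₂
  have hdω₁₂ : Module.finrank ℂ (equivariantHoms π (twist π (ω₁ * ω₂))) = 1 :=
    finrank_equivariantHoms_eq_one hπ (isRepEquiv_twist_mul h₁ h₂)
  -- the four identifications
  have e11 := heq 1 1 1 (fun n _ => rfl) (by simp) (by simp) (by norm_num) (by norm_num)
  have e21 := heq ω₁ (-1) 1 hω₁N (by rw [hg11]; simp) (by rw [hg12]; simp)
    (by norm_num) (by norm_num)
  have e12 := heq ω₂ 1 (-1) hω₂N (by rw [hg21]; simp) (by rw [hg22]; simp)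
    (by norm_num) (by norm_num)
  have e22 := heq (ω₁ * ω₂) (-1) (-1)
    (fun n hn => by rw [MonoidHom.mul_apply, hω₁N n hn, hω₂N n hn, one_mul])
    (by rw [MonoidHom.mul_apply, Units.val_mul, hg11, hg21]; simp)
    (by rw [MonoidHom.mul_apply, Units.val_mul, hg12, hg22]; simp)
    (by norm_num) (by norm_num)
  have hkermem : ∀ (g : G) (c : ℂ) (y : V →ₗ[ℂ] V),
      y ∈ LinearMap.ker (conjT π g - c • LinearMap.id) ↔ conjT π g y = c • y := by
    intro g c y
    rw [LinearMap.mem_ker, LinearMap.sub_apply, LinearMap.smul_apply, LinearMap.id_apply,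
      sub_eq_zero]
  have hmapT2 : ∀ c : ℂ, ∀ x ∈ W ⊓ LinearMap.ker (conjT π g₁ - c • LinearMap.id),
      conjT π g₂ x ∈ W ⊓ LinearMap.ker (conjT π g₁ - c • LinearMap.id) := by
    rintro c x ⟨hx1, hx2⟩
    refine ⟨hmapsW g₂ x hx1, (hkermem g₁ c _).mpr ?_⟩
    have hx2' := (hkermem g₁ c x).mp hx2
    rw [hcommT x hx1, hx2', map_smul]
  -- assemble via the two splittings
  have split1 := finrank_inf_ker_split (conjT π g₁) W (hmapsW g₁) (fun f hf => hsqT g₁ f hf)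
  have split2p := finrank_inf_ker_split (conjT π g₂)
    (W ⊓ LinearMap.ker (conjT π g₁ - (1 : ℂ) • LinearMap.id)) (hmapT2 1)
    (fun x hx => hsqT g₂ x hx.1)
  have split2m := finrank_inf_ker_split (conjT π g₂)
    (W ⊓ LinearMap.ker (conjT π g₁ - (-1 : ℂ) • LinearMap.id)) (hmapT2 (-1))
    (fun x hx => hsqT g₂ x hx.1)
  rw [split1, split2p, split2m, e11, e12, e21, e22, hd1, hdω₂, hdω₁, hdω₁₂]

end DimFour

section Exclusion

variable {H : Type*} [Group H] {V : Type*} [AddCommGroup V] [Module ℂ V]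

lemma not_both (τ : Representation ℂ H V)
    (hB : DecomposesAsTwiceIrred τ) (hA : DecomposesAsFourDistinctIrreds τ) : False := by
  obtain ⟨U₁, U₂, h₁, h₂, hinf, hsup, hirr1, hequiv⟩ := hB
  obtain ⟨Uf, hUf, hindf, hsupf, hirrf, hnef⟩ := hA
  have hirr2 : IsIrreducibleRep (resSub τ U₂ h₂) := isIrred_of_equiv hequiv hirr1
  have hc : IsCompl U₁ U₂ := ⟨disjoint_iff.mpr hinf, codisjoint_iff.mpr hsup⟩
  have claim : ∀ (Wi : Submodule ℂ V) (hWi : ∀ g, ∀ v ∈ Wi, τ g v ∈ Wi),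
      IsIrreducibleRep (resSub τ Wi hWi) →
        IsRepEquiv (resSub τ Wi hWi) (resSub τ U₁ h₁) := by
    intro Wi hWi hIr
    set p := U₁.linearProjOfIsCompl U₂ hc with hp
    set q := U₂.linearProjOfIsCompl U₁ hc.symm with hq
    have hpe : ∀ g v, (p (τ g v) : V) = τ g (p v : V) := pair_proj_equivariant τ h₁ h₂ hc
    have hqe : ∀ g v, (q (τ g v) : V) = τ g (q v : V) := pair_proj_equivariant τ h₂ h₁ hc.symm
    have hmem1 : p ∘ₗ Wi.subtype ∈ equivariantHoms (resSub τ Wi hWi) (resSub τ U₁ h₁) := by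
      intro g x
      apply Subtype.ext
      simp only [LinearMap.comp_apply, Submodule.coe_subtype, resSub_apply]
      exact hpe g (x : V)
    have hmem2 : q ∘ₗ Wi.subtype ∈ equivariantHoms (resSub τ Wi hWi) (resSub τ U₂ h₂) := by
      intro g x
      apply Subtype.ext
      simp only [LinearMap.comp_apply, Submodule.coe_subtype, resSub_apply]
      exact hqe g (x : V)
    by_cases hp0 : p ∘ₗ Wi.subtype = 0
    · have hq0 : q ∘ₗ Wi.subtype ≠ 0 := by
        intro hq0
        obtain ⟨x, hx⟩ := hIr.1
        apply hx
        have e1 : p (x : V) = 0 := by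
          have := LinearMap.congr_fun hp0 x
          simpa using this
        have e2 : q (x : V) = 0 := by
          have := LinearMap.congr_fun hq0 x
          simpa using this
        have e3 : (x : V) = 0 := by
          have : (U₁.linearProjOfIsCompl U₂ hc (x : V) : V) +
              (U₂.linearProjOfIsCompl U₁ hc.symm (x : V) : V) = (x : V) :=
            Submodule.projection_add_projection_eq_self hc (x : V)
          rw [← hp, ← hq, e1, e2] at this
          simpa using this.symm
        exact Subtype.ext e3
      have hequiv2 : IsRepEquiv (resSub τ Wi hWi) (resSub τ U₂ h₂) :=
        isRepEquiv_of_equivariant_ne_zero hIr hirr2 hmem2 hq0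
      exact hequiv2.trans hequiv.symm
    · exact isRepEquiv_of_equivariant_ne_zero hIr hirr1 hmem1 hp0
  have e0 := claim (Uf 0) (hUf 0) (hirrf 0)
  have e1 := claim (Uf 1) (hUf 1) (hirrf 1)
  exact hnef 0 1 (by decide) (e0.trans e1.symm)

end Exclusion

/-- Let `N ⊴ G` with `G/N ≅ ℤ/2 × ℤ/2`, let `ω₁ ≠ ω₂` be distinct
nontrivial characters of `G` trivial on `N`, and let `π` be an irreducible complex
representation of `G` with `π ≅ π ⊗ ω₁` and `π ≅ π ⊗ ω₂`.  Then exactly one of the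
following holds: `Res_N π` is a direct sum of four pairwise non-isomorphic irreducible
representations, or `Res_N π ≅ ρ ⊕ ρ` for a single irreducible `ρ`. -/
theorem restriction_klein_four_dichotomy
    {G : Type*} [Group G] [Finite G] (N : Subgroup G) [N.Normal]
    (hquot : Nonempty ((G ⧸ N) ≃* Multiplicative (ZMod 2) × Multiplicative (ZMod 2)))
    (ω₁ ω₂ : G →* ℂˣ) (hne : ω₁ ≠ ω₂) (hω₁ : ω₁ ≠ 1) (hω₂ : ω₂ ≠ 1)
    (hω₁N : ∀ n ∈ N, ω₁ n = 1) (hω₂N : ∀ n ∈ N, ω₂ n = 1)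
    {V : Type*} [AddCommGroup V] [Module ℂ V] [FiniteDimensional ℂ V]
    (π : Representation ℂ G V) (hπ : IsIrreducibleRep π)
    (h₁ : IsRepEquiv π (twist π ω₁)) (h₂ : IsRepEquiv π (twist π ω₂)) :
    Xor' (DecomposesAsFourDistinctIrreds (π.comp N.subtype))
      (DecomposesAsTwiceIrred (π.comp N.subtype)) := by
  classical
  set ρ := π.comp N.subtype with hρ
  obtain ⟨k, U, hU, hind, hsup, hirr⟩ := exists_irred_decomp ρ
  have hfour : Module.finrank ℂ (equivariantHoms ρ ρ) = 4 :=
    finrank_endN_eq_four N hquot ω₁ ω₂ hne hω₁ hω₂ hω₁N hω₂N π hπ h₁ h₂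
  have hsum := finrank_equivariantHoms_self_eq_sum ρ hU hind hsup
  rw [hfour] at hsum
  set d : Fin k → Fin k → ℕ := fun i j =>
    Module.finrank ℂ (equivariantHoms (resSub ρ (U i) (hU i)) (resSub ρ (U j) (hU j)))
    with hd
  have hsum' : ∑ i, ∑ j, d i j = 4 := by
    rw [Fintype.sum_prod_type] at hsum
    exact hsum.symm
  have hdiag : ∀ i, d i i = 1 := fun i =>
    finrank_equivariantHoms_eq_one (hirr i) (IsRepEquiv.refl _)
  have hdone : ∀ i j, IsRepEquiv (resSub ρ (U i) (hU i)) (resSub ρ (U j) (hU j)) →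
      d i j = 1 := fun i j h => finrank_equivariantHoms_eq_one (hirr i) h
  have hdzero : ∀ i j, ¬ IsRepEquiv (resSub ρ (U i) (hU i)) (resSub ρ (U j) (hU j)) →
      d i j = 0 := fun i j h => finrank_equivariantHoms_eq_zero (hirr i) (hirr j) h
  have hdsymm : ∀ i j, d i j = d j i := by
    intro i j
    by_cases h : IsRepEquiv (resSub ρ (U i) (hU i)) (resSub ρ (U j) (hU j))
    · rw [hdone i j h, hdone j i h.symm]
    · rw [hdzero i j h, hdzero j i (fun h' => h h'.symm)]
  have hdle : ∀ i j, d i j ≤ 1 := by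
    intro i j
    by_cases h : IsRepEquiv (resSub ρ (U i) (hU i)) (resSub ρ (U j) (hU j))
    · rw [hdone i j h]
    · rw [hdzero i j h]; omega
  have hdiff : ∀ i j, d i j = 1 → IsRepEquiv (resSub ρ (U i) (hU i)) (resSub ρ (U j) (hU j)) := by
    intro i j h
    by_contra hcon
    rw [hdzero i j hcon] at h
    exact absurd h (by norm_num)
  have hk4 : k ≤ 4 := by
    have h1 : ∑ i : Fin k, 1 ≤ ∑ i, ∑ j, d i j := by
      refine Finset.sum_le_sum fun i _ => ?_
      have := Finset.single_le_sum (f := fun j => d i j)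
        (fun j _ => Nat.zero_le _) (Finset.mem_univ i)
      simpa [hdiag i] using this
    rw [hsum'] at h1
    simpa using h1
  interval_cases k
  · -- k = 0 : impossible
    simp at hsum'
  · -- k = 1 : impossible
    rw [Fin.sum_univ_one, Fin.sum_univ_one, hdiag 0] at hsum'
    exact absurd hsum' (by norm_num)
  · -- k = 2 : the ρ ⊕ ρ case
    have h00 := hdiag 0
    have h11 := hdiag 1
    have hsymm01 := hdsymm 0 1
    have hle01 := hdle 0 1
    simp only [Fin.sum_univ_two] at hsum'
    have hd01 : d 0 1 = 1 := by omega
    have hequiv01 : IsRepEquiv (resSub ρ (U 0) (hU 0)) (resSub ρ (U 1) (hU 1)) :=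
      hdiff 0 1 hd01
    have hB : DecomposesAsTwiceIrred ρ := by
      refine ⟨U 0, U 1, hU 0, hU 1, ?_, ?_, hirr 0, hequiv01⟩
      · exact disjoint_iff.mp (hind.pairwiseDisjoint (by decide : (0 : Fin 2) ≠ 1))
      · rw [← hsup]
        apply le_antisymm
        · exact sup_le (le_iSup U 0) (le_iSup U 1)
        · refine iSup_le fun i => ?_
          fin_cases i
          · exact le_sup_left
          · exact le_sup_right
    exact Or.inr ⟨hB, fun hA => absurd (not_both ρ hB hA) not_false⟩
  · -- k = 3 : impossible
    have h00 := hdiag 0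
    have h11 := hdiag 1
    have h22 := hdiag 2
    have s01 := hdsymm 0 1
    have s02 := hdsymm 0 2
    have s12 := hdsymm 1 2
    have b01 := hdle 0 1
    have b02 := hdle 0 2
    have b12 := hdle 1 2
    simp only [Fin.sum_univ_three] at hsum'
    omega
  · -- k = 4 : the four-distinct case
    have h00 := hdiag 0
    have h11 := hdiag 1
    have h22 := hdiag 2
    have h33 := hdiag 3
    have s01 := hdsymm 0 1
    have s02 := hdsymm 0 2
    have s03 := hdsymm 0 3
    have s12 := hdsymm 1 2
    have s13 := hdsymm 1 3
    have s23 := hdsymm 2 3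
    simp only [Fin.sum_univ_four] at hsum'
    have z01 : d 0 1 = 0 := by omega
    have z02 : d 0 2 = 0 := by omega
    have z03 : d 0 3 = 0 := by omega
    have z10 : d 1 0 = 0 := by omega
    have z12 : d 1 2 = 0 := by omega
    have z13 : d 1 3 = 0 := by omega
    have z20 : d 2 0 = 0 := by omega
    have z21 : d 2 1 = 0 := by omega
    have z23 : d 2 3 = 0 := by omega
    have z30 : d 3 0 = 0 := by omega
    have z31 : d 3 1 = 0 := by omega
    have z32 : d 3 2 = 0 := by omega
    have hA : DecomposesAsFourDistinctIrreds ρ := by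
      refine ⟨U, hU, hind, hsup, hirr, ?_⟩
      intro i j hij hequivij
      have h1 : d i j = 1 := hdone i j hequivij
      fin_cases i <;> fin_cases j <;>
        first
          | exact absurd rfl hij
          | exact absurd (z01.symm.trans (h1 : d 0 1 = 1)) (by norm_num)
          | exact absurd (z02.symm.trans (h1 : d 0 2 = 1)) (by norm_num)
          | exact absurd (z03.symm.trans (h1 : d 0 3 = 1)) (by norm_num)
          | exact absurd (z10.symm.trans (h1 : d 1 0 = 1)) (by norm_num)
          | exact absurd (z12.symm.trans (h1 : d 1 2 = 1)) (by norm_num)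
          | exact absurd (z13.symm.trans (h1 : d 1 3 = 1)) (by norm_num)
          | exact absurd (z20.symm.trans (h1 : d 2 0 = 1)) (by norm_num)
          | exact absurd (z21.symm.trans (h1 : d 2 1 = 1)) (by norm_num)
          | exact absurd (z23.symm.trans (h1 : d 2 3 = 1)) (by norm_num)
          | exact absurd (z30.symm.trans (h1 : d 3 0 = 1)) (by norm_num)
          | exact absurd (z31.symm.trans (h1 : d 3 1 = 1)) (by norm_num)
          | exact absurd (z32.symm.trans (h1 : d 3 2 = 1)) (by norm_num)
    exact Or.inl ⟨hA, fun hB => absurd (not_both ρ hB hA) not_false⟩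


end RestrictionMult
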